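/- With notation as above (R_0 a commutative Noetherian domain, S = R_0[U_1,...,U_s], f ∈ S homogeneous nonzero of degree δ, d ≥ s): every maximal minor of M(f;d) lies in content(f)^{C(d−1,s−1)} ⊆ content(f), and moreover content(f) is contained in the radical of the ideal generated by the t × t minors of M(f;d), where t = C(d−1, s−1). -/

import Mathlib

open MvPolynomial

noncomputable section

/-- Index type for the monomial basis of the degree `-d` component of the module of
inverse polynomials `R₀[U₁⁻, …, U_s⁻]` (a monomial `U^{-λ}`, all `λᵢ ≥ 1`, `∑ λᵢ = d`,
is encoded by the tuple `μ = λ - 1` with `∑ μᵢ = d - s`). -/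
def InvBasis (s d : ℕ) : Type :=
  {μ : Fin s → ℕ // μ ∈ Finset.Nat.antidiagonalTuple s (d - s)}

instance (s d : ℕ) : DecidableEq (InvBasis s d) :=
  inferInstanceAs (DecidableEq {μ : Fin s → ℕ // μ ∈ Finset.Nat.antidiagonalTuple s (d - s)})

instance (s d : ℕ) : Fintype (InvBasis s d) :=
  inferInstanceAs (Fintype {μ : Fin s → ℕ // μ ∈ Finset.Nat.antidiagonalTuple s (d - s)})

/-- The matrix `M(f;d)` of multiplication by `f` from the degree `-(d+δ)` component to the
degree `-d` component of the module of inverse polynomials, in the monomial bases. -/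
def invMulMatrix {R₀ : Type*} [CommRing R₀] (s : ℕ) (f : MvPolynomial (Fin s) R₀)
    (δ d : ℕ) : Matrix (InvBasis s d) (InvBasis s (d + δ)) R₀ :=
  fun ρ μ =>
    if ∀ i, ρ.1 i ≤ μ.1 i then
      MvPolynomial.coeff (Finsupp.equivFunOnFinite.symm fun i => μ.1 i - ρ.1 i) f
    else 0

/-- The content of a multivariate polynomial: the ideal of `R₀` generated by all of its
coefficients. -/
def polyContent {R₀ : Type*} [CommRing R₀] {s : ℕ} (f : MvPolynomial (Fin s) R₀) :
    Ideal R₀ :=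
  Ideal.span (Set.range fun m => MvPolynomial.coeff m f)


section AuxLemmas

open Matrix in
lemma aux_exists_submatrix_det_ne_zero {K : Type*} [Field K] {R C : Type*} [Fintype R]
    [Fintype C] [DecidableEq R] (M : Matrix R C K)
    (h : LinearIndependent K (fun ρ => M ρ)) :
    ∃ g : R → C, Function.Injective g ∧ (M.submatrix id g).det ≠ 0 := by
  classical
  have hspan : Submodule.span K (Set.range Mᵀ) = ⊤ := by
    apply Submodule.eq_top_of_finrank_eq
    rw [show Set.range Mᵀ = Set.range M.col from rfl, ← Matrix.rank_eq_finrank_span_cols, h.rank_matrix, Module.finrank_fintype_fun_eq_card]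
  obtain ⟨b, hbsub, hbspan, hbind⟩ := exists_linearIndependent K (Set.range Mᵀ)
  rw [hspan] at hbspan
  have hbfin : b.Finite := (Set.finite_range Mᵀ).subset hbsub
  haveI := hbfin.fintype
  have hcard : Fintype.card R = Fintype.card b := by
    have h1 := finrank_span_set_eq_card hbind
    rw [hbspan, finrank_top, Module.finrank_fintype_fun_eq_card] at h1
    rw [h1, Set.toFinset_card]
  let e : R ≃ b := Fintype.equivOfCardEq hcard
  have hmem : ∀ ρ : R, ((e ρ : (R → K))) ∈ Set.range Mᵀ := fun ρ => hbsub (e ρ).2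
  let g : R → C := fun ρ => (hmem ρ).choose
  have hg : ∀ ρ, Mᵀ (g ρ) = (e ρ : R → K) := fun ρ => (hmem ρ).choose_spec
  refine ⟨g, ?_, ?_⟩
  · intro ρ ρ' hge
    have : (e ρ : R → K) = (e ρ' : R → K) := by rw [← hg, ← hg, hge]
    exact e.injective (Subtype.ext this)
  · have hli : LinearIndependent K (fun ρ : R => (M.submatrix id g)ᵀ ρ) := by
      have : (fun ρ : R => (M.submatrix id g)ᵀ ρ) = fun ρ => ((e ρ : R → K)) := by
        funext ρ
        rw [← hg ρ]
        rfl
      rw [this]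
      exact hbind.comp e e.injective
    have := Matrix.linearIndependent_cols_iff_isUnit.mp hli
    exact ((Matrix.isUnit_iff_isUnit_det _).mp this).ne_zero

lemma aux_weight_one_eq (s : ℕ) (m : Fin s →₀ ℕ) :
    (Finsupp.weight 1 m : ℕ) = ∑ i, m i := by
  rw [Finsupp.weight_apply, Finsupp.sum_fintype]
  · simp
  · intro i; simp

lemma aux_rows_li {K : Type*} [Field K] (s : ℕ)
    (f : MvPolynomial (Fin s) K) (hf : f ≠ 0) (δ : ℕ) (hhom : f.IsHomogeneous δ)
    (d : ℕ) (hd : s ≤ d) :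
    LinearIndependent K (fun ρ : InvBasis s d => invMulMatrix s f δ d ρ) := by
  rw [Fintype.linearIndependent_iff]
  intro c hc ρ₀
  classical
  set ι : InvBasis s d → (Fin s →₀ ℕ) := fun ρ => Finsupp.equivFunOnFinite.symm ρ.1 with hι
  have hιinj : Function.Injective ι := fun a b h => by
    apply Subtype.ext
    exact Finsupp.equivFunOnFinite.symm.injective h
  set P : MvPolynomial (Fin s) K := ∑ ρ : InvBasis s d, monomial (ι ρ) (c ρ) with hP
  have hPcoeff : ∀ ρ : InvBasis s d, coeff (ι ρ) P = c ρ := by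
    intro ρ
    rw [hP, coeff_sum]
    rw [Finset.sum_eq_single ρ]
    · simp [coeff_monomial]
    · intro b _ hb
      rw [coeff_monomial, if_neg (fun h => hb (hιinj h))]
    · simp
  have hρsum : ∀ ρ : InvBasis s d, ∑ i, ρ.1 i = d - s := fun ρ =>
    Finset.Nat.mem_antidiagonalTuple.mp ρ.2
  have hPf : P * f = 0 := by
    apply MvPolynomial.ext
    intro m
    rw [hP, Finset.sum_mul, coeff_sum, coeff_zero]
    by_cases hm : ∑ i, m i = d + δ - s
    · have hμmem : (Finsupp.equivFunOnFinite m : Fin s → ℕ) ∈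
          Finset.Nat.antidiagonalTuple s (d + δ - s) :=
        Finset.Nat.mem_antidiagonalTuple.mpr (by simpa using hm)
      set μ : InvBasis s (d + δ) := ⟨Finsupp.equivFunOnFinite m, hμmem⟩ with hμ
      have h0 := congrFun hc μ
      simp only [Finset.sum_apply, Pi.smul_apply, Pi.zero_apply, smul_eq_mul] at h0
      rw [← h0]
      apply Finset.sum_congr rfl
      intro ρ _
      rw [coeff_monomial_mul']
      by_cases hle : ∀ i, ρ.1 i ≤ μ.1 i
      · rw [if_pos, invMulMatrix, if_pos hle]
        · congr 1
          congr 1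
          apply Finsupp.ext
          intro i
          simp [ι, Finsupp.tsub_apply, μ]
        · rw [Finsupp.le_def]
          intro i
          simpa [ι, μ] using hle i
      · rw [if_neg, invMulMatrix, if_neg hle, mul_zero]
        rw [Finsupp.le_def]
        intro h
        exact hle (fun i => by simpa [ι, μ] using h i)
    · apply Finset.sum_eq_zero
      intro ρ _
      rw [coeff_monomial_mul']
      split_ifs with h
      · rcases eq_or_ne (coeff (m - ι ρ) f) 0 with h2 | h2
        · rw [h2, mul_zero]
        · exfalso
          have hdeg := hhom h2
          have : (∑ i, (m - ι ρ) i) = δ := by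
            rw [← aux_weight_one_eq]; exact_mod_cast hdeg
          have hsub : ∀ i, (m - ι ρ) i = m i - ρ.1 i := by
            intro i; simp [Finsupp.tsub_apply, ι]
          have hle : ∀ i, ρ.1 i ≤ m i := fun i => by
            have := (Finsupp.le_def.mp h) i
            simpa [ι] using this
          have hsum1 : (∑ i, (m i - ρ.1 i)) = δ := by
            rw [← this]
            exact Finset.sum_congr rfl fun i _ => (hsub i).symm
          have h3 : (∑ i, m i) = δ + (d - s) := by
            rw [← hρsum ρ, ← hsum1, ← Finset.sum_add_distrib]
            apply Finset.sum_congr rfl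
            intro i _
            have := hle i
            omega
          apply hm
          rw [h3]
          omega
      · rfl
  have hP0 : P = 0 := by
    rcases mul_eq_zero.mp hPf with h | h
    · exact h
    · exact absurd h hf
  have := hPcoeff ρ₀
  rw [hP0] at this
  simpa using this.symm

end AuxLemmas

theorem stmt_16 {R₀ : Type*} [CommRing R₀] [IsDomain R₀] [IsNoetherianRing R₀]
    (s : ℕ) (hs : 1 ≤ s) (f : MvPolynomial (Fin s) R₀) (hf : f ≠ 0)
    (δ : ℕ) (hhom : f.IsHomogeneous δ) (d : ℕ) (hd : s ≤ d) :
    (∀ g : InvBasis s d → InvBasis s (d + δ), Function.Injective g →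
        ((invMulMatrix s f δ d).submatrix id g).det ∈
          polyContent f ^ Fintype.card (InvBasis s d)) ∧
      polyContent f ^ Fintype.card (InvBasis s d) ≤ polyContent f ∧
      polyContent f ≤
        (Ideal.span {x : R₀ | ∃ g : InvBasis s d → InvBasis s (d + δ),
            Function.Injective g ∧
              ((invMulMatrix s f δ d).submatrix id g).det = x}).radical := by
  classical
  have hentry : ∀ (ρ : InvBasis s d) (μ : InvBasis s (d + δ)),
      invMulMatrix s f δ d ρ μ ∈ polyContent f := by
    intro ρ μ
    rw [invMulMatrix]
    split_ifs
    · exact Ideal.subset_span ⟨_, rfl⟩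
    · exact Ideal.zero_mem _
  haveI hne : Nonempty (InvBasis s d) :=
    ⟨⟨Pi.single ⟨0, hs⟩ (d - s), Finset.Nat.mem_antidiagonalTuple.mpr (by simp)⟩⟩
  refine ⟨?_, Ideal.pow_le_self Fintype.card_ne_zero, ?_⟩
  · intro g hg
    rw [Matrix.det_apply]
    apply Submodule.sum_mem
    intro σ _
    rw [Units.smul_def, zsmul_eq_mul]
    apply Ideal.mul_mem_left
    have hpow : polyContent f ^ Fintype.card (InvBasis s d) =
        ∏ _ρ : InvBasis s d, polyContent f := by
      rw [Finset.prod_const, Finset.card_univ]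
    rw [hpow]
    exact Ideal.prod_mem_prod fun ρ _ => hentry _ _
  · rw [Ideal.radical_eq_sInf]
    apply le_sInf
    rintro p ⟨hJp, hp⟩
    haveI : p.IsPrime := hp
    rw [polyContent, Ideal.span_le]
    rintro x ⟨m, rfl⟩
    by_contra hxm
    let π := Ideal.Quotient.mk p
    let K := FractionRing (R₀ ⧸ p)
    let ψ : R₀ →+* K := (algebraMap (R₀ ⧸ p) K).comp π
    have hK : MvPolynomial.map ψ f ≠ 0 := by
      intro h
      apply hxm
      have h1 : coeff m (MvPolynomial.map ψ f) = 0 := by rw [h]; simp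
      rw [coeff_map] at h1
      have h2 : π (coeff m f) = 0 := by
        apply IsFractionRing.injective (R₀ ⧸ p) K
        rw [map_zero]
        exact h1
      exact Ideal.Quotient.eq_zero_iff_mem.mp h2
    obtain ⟨g, hg, hdet⟩ :=
      aux_exists_submatrix_det_ne_zero _ (aux_rows_li s _ hK δ (hhom.map ψ) d hd)
    apply hdet
    have hmap : invMulMatrix s (MvPolynomial.map ψ f) δ d =
        (invMulMatrix s f δ d).map ψ := by
      funext ρ μ
      simp only [invMulMatrix, Matrix.map_apply, coeff_map]
      split_ifs <;> simp
    have hsub : ((invMulMatrix s f δ d).map ψ).submatrix id g =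
        ((invMulMatrix s f δ d).submatrix id g).map ψ := rfl
    rw [hmap, hsub,
      show ((invMulMatrix s f δ d).submatrix id g).map ⇑ψ =
        ψ.mapMatrix ((invMulMatrix s f δ d).submatrix id g) from rfl, ← RingHom.map_det]
    have hdp : ((invMulMatrix s f δ d).submatrix id g).det ∈ p :=
      hJp (Ideal.subset_span ⟨g, hg, rfl⟩)
    show ψ _ = 0
    simp [ψ, π, Ideal.Quotient.eq_zero_iff_mem.mpr hdp]


end
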